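/- arXiv:1111.0414 — 4 statements merged into one kernel-verified Lean document; each statement's English description precedes it below -/
import Mathlib

section
/- Let H ∈ ℝ^{k×n}, let P ∈ ℝ^{n×n} be symmetric positive definite, Q ⊂ ℝ^ℓ compact, A : ℝ^ℓ → ℝ^{n×n} continuous, and let d̄, d ∈ ℝ with d̄ < d. Suppose eᵀ P A(q) e ≤ −d · eᵀ P e for all e ∈ ker H and all q ∈ Q. Then there exists φ > 0 such that wᵀ P A(q) w ≤ φ |H w|² − d̄ · wᵀ P w for all w ∈ ℝ^n and all q ∈ Q. -/
open scoped Matrix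

private lemma quad_smul {n : ℕ} (B : Matrix (Fin n) (Fin n) ℝ) (c : ℝ) (v : Fin n → ℝ) :
    (c • v) ⬝ᵥ B.mulVec (c • v) = c ^ 2 * (v ⬝ᵥ B.mulVec v) := by
  rw [Matrix.mulVec_smul, dotProduct_smul, smul_dotProduct]
  simp [smul_eq_mul]; ring

private lemma quad_smul2 {n : ℕ} (P B : Matrix (Fin n) (Fin n) ℝ) (c : ℝ) (v : Fin n → ℝ) :
    (c • v) ⬝ᵥ P.mulVec (B.mulVec (c • v)) = c ^ 2 * (v ⬝ᵥ P.mulVec (B.mulVec v)) := by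
  rw [Matrix.mulVec_smul, Matrix.mulVec_smul, dotProduct_smul, smul_dotProduct]
  simp [smul_eq_mul]; ring

/-- time-frozen version of Proposition 2.1: a matrix inequality holding on
`ker H` can be extended to all of `ℝ^n` at the cost of adding a multiple of `|Hw|²`. -/
theorem stmt3 (k ℓ n : ℕ)
    (H : Matrix (Fin k) (Fin n) ℝ)
    (P : Matrix (Fin n) (Fin n) ℝ) (hPsymm : P.IsSymm)
    (hPpos : ∀ e : Fin n → ℝ, e ≠ 0 → 0 < e ⬝ᵥ P.mulVec e)
    (Q : Set (EuclideanSpace ℝ (Fin ℓ))) (hQ : IsCompact Q)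
    (A : EuclideanSpace ℝ (Fin ℓ) → Matrix (Fin n) (Fin n) ℝ)
    (hA : ∀ i j, Continuous fun q => A q i j)
    (dbar d : ℝ) (hd : dbar < d)
    (hker : ∀ e : Fin n → ℝ, H.mulVec e = 0 → ∀ q ∈ Q,
      e ⬝ᵥ P.mulVec ((A q).mulVec e) ≤ -d * (e ⬝ᵥ P.mulVec e)) :
    ∃ φ : ℝ, 0 < φ ∧ ∀ (w : Fin n → ℝ), ∀ q ∈ Q,
      w ⬝ᵥ P.mulVec ((A q).mulVec w) ≤
        φ * (∑ i, (H.mulVec w i) ^ 2) - dbar * (w ⬝ᵥ P.mulVec w) := by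
  classical
  set g : (Fin n → ℝ) × EuclideanSpace ℝ (Fin ℓ) → ℝ :=
    fun p => p.1 ⬝ᵥ P.mulVec ((A p.2).mulVec p.1) + dbar * (p.1 ⬝ᵥ P.mulVec p.1) with hgdef
  set h : (Fin n → ℝ) → ℝ := fun w => ∑ i, (H.mulVec w i) ^ 2 with hhdef
  -- continuity of g
  have hgc : Continuous g := by
    apply Continuous.add
    · have : (fun p : (Fin n → ℝ) × EuclideanSpace ℝ (Fin ℓ) =>
          p.1 ⬝ᵥ P.mulVec ((A p.2).mulVec p.1)) =
          fun p => ∑ i, p.1 i * ∑ j, P i j * ∑ m, A p.2 j m * p.1 m := by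
        funext p
        simp [dotProduct, Matrix.mulVec, Finset.mul_sum]
      rw [this]
      refine continuous_finset_sum _ fun i _ => Continuous.mul ?_ ?_
      · exact (continuous_apply i).comp continuous_fst
      · refine continuous_finset_sum _ fun j _ => Continuous.mul continuous_const ?_
        refine continuous_finset_sum _ fun m _ => Continuous.mul ?_ ?_
        · exact (hA j m).comp continuous_snd
        · exact (continuous_apply m).comp continuous_fst
    · apply Continuous.mul continuous_const
      have : (fun p : (Fin n → ℝ) × EuclideanSpace ℝ (Fin ℓ) => p.1 ⬝ᵥ P.mulVec p.1) =
          fun p => ∑ i, p.1 i * ∑ j, P i j * p.1 j := by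
        funext p; simp [dotProduct, Matrix.mulVec]
      rw [this]
      refine continuous_finset_sum _ fun i _ => Continuous.mul
        ((continuous_apply i).comp continuous_fst) ?_
      exact continuous_finset_sum _ fun j _ => Continuous.mul continuous_const
        ((continuous_apply j).comp continuous_fst)
  have hhc : Continuous h := by
    have : h = fun w => ∑ i, (∑ j, H i j * w j) ^ 2 := by
      funext w; simp [hhdef, Matrix.mulVec, dotProduct]
    rw [this]
    refine continuous_finset_sum _ fun i _ => Continuous.pow ?_ 2
    exact continuous_finset_sum _ fun j _ => Continuous.mul continuous_const (continuous_apply j)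
  have hh0 : ∀ w, 0 ≤ h w := fun w => Finset.sum_nonneg fun i _ => sq_nonneg _
  -- key: inequality on the sphere
  have hsph : IsCompact (Metric.sphere (0 : Fin n → ℝ) 1) := isCompact_sphere 0 1
  set K := ((Metric.sphere (0 : Fin n → ℝ) 1) ×ˢ Q) ∩ {p | 0 ≤ g p} with hKdef
  have hKc : IsCompact K :=
    (hsph.prod hQ).inter_right (isClosed_le continuous_const hgc)
  have hKpos : ∀ p ∈ K, 0 < h p.1 := by
    rintro ⟨w, q⟩ ⟨⟨hws, hq⟩, hg0⟩
    rcases lt_or_ge 0 (h w) with h1 | h1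
    · exact h1
    exfalso
    have hz : h w = 0 := le_antisymm h1 (hh0 w)
    have hHw : H.mulVec w = 0 := by
      funext i
      have := (Finset.sum_eq_zero_iff_of_nonneg (fun i _ => sq_nonneg (H.mulVec w i))).mp hz
        i (Finset.mem_univ i)
      exact (pow_eq_zero_iff two_ne_zero).mp this
    have hw0 : w ≠ 0 := by
      intro h0
      simp [h0] at hws
    have hP := hPpos w hw0
    have := hker w hHw q hq
    have : g (w, q) < 0 := by
      simp only [hgdef]
      nlinarith
    simp only [Set.mem_setOf_eq] at hg0
    linarith
  -- get φ such that g ≤ φ * h on sphere × Q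
  have key : ∃ φ : ℝ, 0 < φ ∧ ∀ w ∈ Metric.sphere (0 : Fin n → ℝ) 1, ∀ q ∈ Q,
      g (w, q) ≤ φ * h w := by
    rcases K.eq_empty_or_nonempty with hKe | hne
    · refine ⟨1, one_pos, fun w hw q hq => ?_⟩
      have : (w, q) ∉ K := by rw [hKe]; exact Set.notMem_empty _
      have hlt : ¬ (0 ≤ g (w, q)) := by
        intro h0
        exact this ⟨Set.mk_mem_prod hw hq, h0⟩
      push_neg at hlt
      have := hh0 w
      linarith
    · obtain ⟨p₀, hp₀, hmin⟩ := hKc.exists_isMinOn hne (hhc.comp continuous_fst).continuousOn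
      obtain ⟨p₁, hp₁, hmax⟩ := hKc.exists_isMaxOn hne hgc.continuousOn
      set δ := h p₀.1 with hδ
      have hδpos : 0 < δ := hKpos p₀ hp₀
      set M := g p₁ with hM
      have hM0 : 0 ≤ M := hp₁.2
      refine ⟨(M + 1) / δ, by positivity, fun w hw q hq => ?_⟩
      rcases lt_or_ge (g (w, q)) 0 with h1 | h1
      · have h2 : 0 ≤ (M + 1) / δ * h w := by positivity
        exact le_trans h1.le h2
      · have hmem : (w, q) ∈ K := ⟨Set.mk_mem_prod hw hq, h1⟩
        have hge : δ ≤ h w := isMinOn_iff.mp hmin (w, q) hmem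
        have hle : g (w, q) ≤ M := isMaxOn_iff.mp hmax (w, q) hmem
        have : (M + 1) / δ * δ ≤ (M + 1) / δ * h w := by
          apply mul_le_mul_of_nonneg_left hge (by positivity)
        rw [div_mul_cancel₀ _ (ne_of_gt hδpos)] at this
        calc g (w, q) ≤ M := hle
          _ ≤ M + 1 := by linarith
          _ ≤ (M + 1) / δ * h w := this
  obtain ⟨φ, hφpos, hφ⟩ := key
  refine ⟨φ, hφpos, fun w q hq => ?_⟩
  -- reduce goal to g ≤ φ * h
  have main : g (w, q) ≤ φ * h w := by
    rcases eq_or_ne w 0 with rfl | hw0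
    · simp [hgdef, hhdef, Matrix.mulVec_zero, dotProduct_zero]
    · set c := ‖w‖ with hc
      have hcpos : 0 < c := norm_pos_iff.mpr hw0
      set u := c⁻¹ • w with hu
      have hun : u ∈ Metric.sphere (0 : Fin n → ℝ) 1 := by
        rw [mem_sphere_zero_iff_norm, hu, norm_smul, norm_inv, hc, norm_norm]
        exact inv_mul_cancel₀ (ne_of_gt hcpos)
      have hwu : w = c • u := by
        rw [hu, smul_smul, mul_inv_cancel₀ (ne_of_gt hcpos), one_smul]
      have hgscale : g (w, q) = c ^ 2 * g (u, q) := by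
        simp only [hgdef]
        rw [hwu, quad_smul2, quad_smul]
        ring
      have hhscale : h w = c ^ 2 * h u := by
        simp only [hhdef]
        rw [hwu]
        have : ∀ i, H.mulVec (c • u) i = c * H.mulVec u i := by
          intro i; rw [Matrix.mulVec_smul]; simp [smul_eq_mul]
        simp_rw [this, mul_pow, ← Finset.mul_sum]
      rw [hgscale, hhscale, ← mul_assoc, mul_comm φ (c ^ 2), mul_assoc]
      exact mul_le_mul_of_nonneg_left (hφ u hun q hq) (by positivity)
  simp only [hgdef, hhdef] at main ⊢
  linarith
end

section
/- Let P : [t̄0, ∞) → ℝ^{n×n} be C¹ symmetric with P(t) ≥ I and |P(t̄0)| ≤ L for some L > 1, let d̄ : [t̄0, ∞) → ℝ be continuous with ∫_{t̄0}^{t} d̄(s) ds > −ε̄ for all t ≥ t̄0 and ∫_{t̄0}^{∞} d̄(s) ds = ∞, and let e : [t̄0, ∞) → ℝ^n be C¹ with (d/dt)(½ e(t)ᵀ P(t) e(t)) ≤ −2 d̄(t) · ½ e(t)ᵀ P(t) e(t) for all t ≥ t̄0. Then e(t) → 0 as t → ∞, and moreover |e(t)| < |e(t̄0)| √L exp(ε̄)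 + δ for every δ > 0 and all t ≥ t̄0 when e(t̄0) ≠ 0 (i.e. |e(t)| ≤ |e(t̄0)| √L exp(ε̄) for all t ≥ t̄0). -/
open scoped RealInnerProductSpace

/-- under the Grönwall differential inequality on all of `[t̄0, ∞)`,
with `P(t) ≥ I`, `|P(t̄0)| ≤ L`, `∫ d̄ > -ε̄` and `∫_{t̄0}^∞ d̄ = ∞`, the error tends to
zero and satisfies the uniform bound `|e(t)| ≤ |e(t̄0)| √L exp(ε̄)`. -/
theorem stmt7 (n : ℕ) (t0 εbar L : ℝ) (hεbar : 0 < εbar) (hL : 1 < L)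
    (P : ℝ → (EuclideanSpace ℝ (Fin n) →L[ℝ] EuclideanSpace ℝ (Fin n)))
    (hP : ContDiff ℝ 1 P)
    (hPsymm : ∀ t, t0 ≤ t → ∀ x y : EuclideanSpace ℝ (Fin n), ⟪P t x, y⟫ = ⟪x, P t y⟫)
    (hPI : ∀ t, t0 ≤ t → ∀ x : EuclideanSpace ℝ (Fin n), ‖x‖ ^ 2 ≤ ⟪x, P t x⟫)
    (hPL : ‖P t0‖ ≤ L)
    (dbar : ℝ → ℝ) (hdbar : Continuous dbar)
    (hlow : ∀ t, t0 ≤ t → -εbar < ∫ s in t0..t, dbar s)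
    (hdiv : Filter.Tendsto (fun t => ∫ s in t0..t, dbar s) Filter.atTop Filter.atTop)
    (e : ℝ → EuclideanSpace ℝ (Fin n)) (he : ContDiff ℝ 1 e)
    (hV : ∀ t, t0 ≤ t →
      deriv (fun s => (1 / 2 : ℝ) * ⟪e s, P s (e s)⟫) t ≤
        -2 * dbar t * ((1 / 2 : ℝ) * ⟪e t, P t (e t)⟫)) :
    Filter.Tendsto e Filter.atTop (nhds 0) ∧
      ∀ t, t0 ≤ t → ‖e t‖ ≤ ‖e t0‖ * Real.sqrt L * Real.exp εbar := by
  have hL0 : (0:ℝ) ≤ L := le_of_lt (lt_trans zero_lt_one hL)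
  set V : ℝ → ℝ := fun s => (1 / 2 : ℝ) * ⟪e s, P s (e s)⟫ with hVdef
  have hVcd : ContDiff ℝ 1 V := contDiff_const.mul (he.inner ℝ (hP.clm_apply he))
  set I : ℝ → ℝ := fun t => ∫ s in t0..t, dbar s with hIdef
  have hIderiv : ∀ t, HasDerivAt I (dbar t) t := fun t =>
    (hdbar.integral_hasStrictDerivAt t0 t).hasDerivAt
  have hIdiff : Differentiable ℝ I := fun t => (hIderiv t).differentiableAt
  have hIcont : Continuous I := hIdiff.continuous
  set W : ℝ → ℝ := fun t => V t * Real.exp (2 * I t) with hWdef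
  have hWderiv : ∀ t, HasDerivAt W
      (deriv V t * Real.exp (2 * I t) + V t * (Real.exp (2 * I t) * (2 * dbar t))) t := by
    intro t
    have hVd : HasDerivAt V (deriv V t) t :=
      ((hVcd.differentiable one_ne_zero) t).hasDerivAt
    have hE : HasDerivAt (fun s => Real.exp (2 * I s)) (Real.exp (2 * I t) * (2 * dbar t)) t :=
      ((hIderiv t).const_mul 2).exp
    exact hVd.mul hE
  have hanti : AntitoneOn W (Set.Ici t0) := by
    apply antitoneOn_of_deriv_nonpos (convex_Ici t0)
    · exact ((hVcd.continuous.mul (Real.continuous_exp.comp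
        (continuous_const.mul hIcont)))).continuousOn
    · exact fun x _ => ((hWderiv x).differentiableAt).differentiableWithinAt
    · intro x hx
      rw [interior_Ici] at hx
      rw [(hWderiv x).deriv]
      have h1 : deriv V x ≤ -2 * dbar x * V x := hV x (le_of_lt hx)
      have h2 : (0:ℝ) < Real.exp (2 * I x) := Real.exp_pos _
      nlinarith [h1, h2]
  have hIt0 : I t0 = 0 := intervalIntegral.integral_same
  have hVbound : ∀ t, t0 ≤ t → V t ≤ V t0 * Real.exp (-(2 * I t)) := by
    intro t ht
    have hWt : W t ≤ W t0 := hanti Set.self_mem_Ici ht ht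
    have hWt0 : W t0 = V t0 := by simp [hWdef, hIt0]
    rw [hWt0] at hWt
    have h1 : (0:ℝ) < Real.exp (2 * I t) := Real.exp_pos _
    have := mul_le_mul_of_nonneg_right hWt (le_of_lt (Real.exp_pos (-(2 * I t))))
    calc V t = V t * Real.exp (2 * I t) * Real.exp (-(2 * I t)) := by
            rw [mul_assoc, ← Real.exp_add]; simp
      _ ≤ V t0 * Real.exp (-(2 * I t)) := this
  have hnormsq : ∀ t, t0 ≤ t → ‖e t‖ ^ 2 ≤ 2 * V t := by
    intro t ht
    have := hPI t ht (e t)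
    simp only [hVdef]
    linarith
  have hVt0nonneg : 0 ≤ 2 * V t0 := le_trans (sq_nonneg ‖e t0‖) (hnormsq t0 le_rfl)
  have hVt0L : 2 * V t0 ≤ L * ‖e t0‖ ^ 2 := by
    have h1 : ⟪e t0, P t0 (e t0)⟫ ≤ ‖e t0‖ * ‖P t0 (e t0)‖ := real_inner_le_norm _ _
    have h2 : ‖P t0 (e t0)‖ ≤ ‖P t0‖ * ‖e t0‖ := (P t0).le_opNorm _
    have h3 : (0:ℝ) ≤ ‖e t0‖ := norm_nonneg _
    have h4 : (0:ℝ) ≤ ‖P t0‖ := norm_nonneg _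
    simp only [hVdef]
    nlinarith
  -- the uniform bound
  have hbound : ∀ t, t0 ≤ t → ‖e t‖ ≤ ‖e t0‖ * Real.sqrt L * Real.exp εbar := by
    intro t ht
    have hsq : ‖e t‖ ^ 2 ≤ (‖e t0‖ * Real.sqrt L * Real.exp εbar) ^ 2 := by
      have hexp : Real.exp (-(2 * I t)) ≤ Real.exp (2 * εbar) := by
        apply Real.exp_le_exp.2
        have := hlow t ht
        simp only [hIdef] at this ⊢
        linarith
      have h1 : ‖e t‖ ^ 2 ≤ 2 * V t0 * Real.exp (-(2 * I t)) := by
        have := hVbound t ht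
        have := hnormsq t ht
        nlinarith [Real.exp_pos (-(2 * I t))]
      have h2 : 2 * V t0 * Real.exp (-(2 * I t)) ≤ L * ‖e t0‖ ^ 2 * Real.exp (2 * εbar) := by
        apply mul_le_mul hVt0L hexp (le_of_lt (Real.exp_pos _))
        positivity
      have h3 : (‖e t0‖ * Real.sqrt L * Real.exp εbar) ^ 2
          = L * ‖e t0‖ ^ 2 * Real.exp (2 * εbar) := by
        have hs : Real.sqrt L ^ 2 = L := Real.sq_sqrt hL0
        have he2 : Real.exp εbar ^ 2 = Real.exp (2 * εbar) := by
          rw [show (2:ℝ) * εbar = εbar + εbar by ring, Real.exp_add]; ring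
        rw [mul_pow, mul_pow, hs, he2]; ring
      linarith
    calc ‖e t‖ = Real.sqrt (‖e t‖ ^ 2) := (Real.sqrt_sq (norm_nonneg _)).symm
      _ ≤ Real.sqrt ((‖e t0‖ * Real.sqrt L * Real.exp εbar) ^ 2) := Real.sqrt_le_sqrt hsq
      _ = ‖e t0‖ * Real.sqrt L * Real.exp εbar := by
          apply Real.sqrt_sq; positivity
  refine ⟨?_, hbound⟩
  -- convergence to zero
  have htend0 : Filter.Tendsto (fun t => 2 * V t0 * Real.exp (-(2 * I t)))
      Filter.atTop (nhds 0) := by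
    have h1 : Filter.Tendsto (fun t => -(2 * I t)) Filter.atTop Filter.atBot := by
      have := hdiv.const_mul_atTop (show (0:ℝ) < 2 by norm_num)
      exact Filter.tendsto_neg_atTop_atBot.comp this
    have h2 : Filter.Tendsto (fun t => Real.exp (-(2 * I t))) Filter.atTop (nhds 0) :=
      Real.tendsto_exp_atBot.comp h1
    simpa using h2.const_mul (2 * V t0)
  have hsqtend : Filter.Tendsto (fun t => ‖e t‖ ^ 2) Filter.atTop (nhds 0) := by
    apply squeeze_zero' (Filter.Eventually.of_forall fun t => sq_nonneg _) _ htend0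
    filter_upwards [Filter.eventually_ge_atTop t0] with t ht
    have := hVbound t ht
    have := hnormsq t ht
    nlinarith [Real.exp_pos (-(2 * I t))]
  have hnormtend : Filter.Tendsto (fun t => ‖e t‖) Filter.atTop (nhds 0) := by
    have := hsqtend.sqrt
    simpa [Real.sqrt_sq (norm_nonneg _)] using this
  exact tendsto_zero_iff_norm_tendsto_zero.2 hnormtend
end

section
/- Fact I (integral domination lemma): Let t_0 ≥ 0 and let φ : [t_0, ∞) → ℝ_{>0}, ζ : [t_0, ∞) → ℝ_{≥0}, θ : [t_0, ∞) → ℝ_{≥0} be continuous with θ(t) ≠ 0 for almost every t ≥ t_0. Then for every ε > 0 there exist a C¹ function ℓ : [t_0, ∞) → ℝ_{≥0} and a continuous function h : [t_0, ∞) → ℝ_{≥0} such that (φ(t) − ℓ(t)θ(t))ζ(t) ≤ h(t) for all t ≥ t_0, φ(t) ≥ ℓ(t)θ(t) for all t ≥ t_0, ∫_{t_0}^{∞} h(s) ds < ε, and ℓ(t_0) = 0. -/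
open MeasureTheory
open Manifold

lemma smooth_sel (T : ℝ → Set ℝ) (hT : ∀ x, Convex ℝ (T x))
    (Hloc : ∀ x : ℝ, ∃ c : ℝ, ∀ᶠ y in nhds x, c ∈ T y) :
    ∃ l : ℝ → ℝ, ContDiff ℝ 1 l ∧ ∀ x, l x ∈ T x := by
  obtain ⟨g, hg⟩ := exists_contMDiffMap_forall_mem_convex_of_local_const (𝓘(ℝ, ℝ)) (n := (⊤ : ℕ∞)) hT Hloc
  exact ⟨g, (contMDiff_iff_contDiff.mp g.contMDiff).of_le (by exact_mod_cast le_top), hg⟩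

lemma exists_r (t0 ε : ℝ) (hε : 0 < ε) (φb ζb θb : ℝ → ℝ)
    (hφb : Continuous φb) (hζb : Continuous ζb) (hθb : Continuous θb)
    (hφpos : ∀ y ∈ Set.Ici t0, 0 < φb y) (hζnn : ∀ y ∈ Set.Ici t0, 0 ≤ ζb y)
    (hZ : volume.restrict (Set.Ici t0) ({t0} ∪ {y | θb y = 0}) = 0) :
    ∃ r : ℝ → ℝ, Continuous r ∧ (∀ y ∈ Set.Ici t0, 0 < r y) ∧
      (∀ y ∈ ({t0} ∪ {y | θb y = 0}) ∩ Set.Ici t0, φb y < r y) ∧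
      IntegrableOn (fun y => r y * ζb y) (Set.Ici t0) ∧
      (∫ y in Set.Ici t0, r y * ζb y) < ε := by
  set Z : Set ℝ := ({t0} ∪ {y | θb y = 0}) ∩ Set.Ici t0 with hZdef
  have hZclosed : IsClosed Z :=
    ((isClosed_singleton.union (isClosed_eq hθb continuous_const)).inter isClosed_Ici)
  set ν := volume.restrict (Set.Ici t0) with hν
  haveI : IsLocallyFiniteMeasure ν := Measure.isLocallyFiniteMeasure_of_le Measure.restrict_le_self
  set μ' := ν.withDensity (fun y => ENNReal.ofReal ((φb y + 1) * ζb y)) with hμ'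
  haveI : IsLocallyFiniteMeasure μ' :=
    IsLocallyFiniteMeasure.withDensity_ofReal ((hφb.add continuous_const).mul hζb)
  have hμ'Z : μ' Z = 0 := by
    refine (withDensity_absolutelyContinuous ν _) ?_
    exact measure_mono_null Set.inter_subset_left hZ
  obtain ⟨U, hZU, hUopen, hμ'U⟩ := Set.exists_isOpen_lt_of_lt Z (ENNReal.ofReal (ε/4))
    (by rw [hμ'Z]; exact ENNReal.ofReal_pos.2 (by linarith))
  obtain ⟨χ, hχ0, hχ1, hχmem⟩ := exists_continuous_zero_one_of_isClosed
    (hUopen.isClosed_compl) hZclosed (Set.disjoint_compl_left_iff_subset.2 hZU)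
  set δ := ε / (2 * (Real.sqrt Real.pi + 1)) with hδdef
  have hsqrtpos : (0:ℝ) < Real.sqrt Real.pi + 1 := by positivity
  have hδpos : 0 < δ := by positivity
  set ρ : ℝ → ℝ := fun y => δ * Real.exp (-1 * y^2) / (1 + |ζb y|) with hρdef
  have hden : ∀ y, (0:ℝ) < 1 + |ζb y| := fun y => by positivity
  have hρc : Continuous ρ := by
    apply Continuous.div
    · exact continuous_const.mul (((continuous_const.mul (continuous_pow 2))).rexp)
    · exact continuous_const.add hζb.abs
    · exact fun y => (hden y).ne'
  have hρpos : ∀ y, 0 < ρ y := fun y => by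
    apply div_pos (by positivity) (hden y)
  refine ⟨fun y => ρ y + (φb y + 1) * χ y, ?_, ?_, ?_, ?_⟩
  · exact hρc.add ((hφb.add continuous_const).mul χ.continuous)
  · intro y hy
    have h1 : 0 ≤ (φb y + 1) * χ y :=
      mul_nonneg (by linarith [hφpos y hy]) (hχmem y).1
    show 0 < ρ y + (φb y + 1) * χ y
    linarith [hρpos y]
  · intro y hy
    have h1 : χ y = 1 := hχ1 hy
    show φb y < ρ y + (φb y + 1) * χ y
    rw [h1]
    have := hφpos y hy.2
    linarith [hρpos y]
  ·
    -- shared facts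
    have hbound : ∀ y : ℝ, ‖ρ y * ζb y‖ ≤ δ * Real.exp (-1 * y^2) := by
      intro y
      rw [norm_mul, Real.norm_eq_abs, Real.norm_eq_abs, abs_of_pos (hρpos y)]
      rw [hρdef]
      show δ * Real.exp (-1 * y ^ 2) / (1 + |ζb y|) * |ζb y| ≤ δ * Real.exp (-1 * y ^ 2)
      rw [div_mul_eq_mul_div, div_le_iff₀ (hden y)]
      nlinarith [Real.exp_pos (-1 * y^2), abs_nonneg (ζb y), hδpos.le,
        mul_nonneg hδpos.le (Real.exp_pos (-1 * y^2)).le]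
    have hgauss : Integrable (fun y : ℝ => δ * Real.exp (-1 * y^2)) :=
      (integrable_exp_neg_mul_sq one_pos).const_mul δ
    have hρζint : IntegrableOn (fun y => ρ y * ζb y) (Set.Ici t0) := by
      refine Integrable.mono' hgauss.integrableOn
        ((hρc.mul hζb).aestronglyMeasurable) ?_
      exact Filter.Eventually.of_forall hbound
    set gE : ℝ → ENNReal := fun y => ENNReal.ofReal ((φb y + 1) * ζb y) with hgE
    have hf2nn : ∀ y ∈ Set.Ici t0, 0 ≤ (φb y + 1) * χ y * ζb y := fun y hy =>
      mul_nonneg (mul_nonneg (by linarith [hφpos y hy]) (hχmem y).1) (hζnn y hy)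
    have key : ∀ y, y ∈ Set.Ici t0 →
        ENNReal.ofReal ((φb y + 1) * χ y * ζb y) ≤ U.indicator gE y := by
      intro y hy
      by_cases hyU : y ∈ U
      · rw [Set.indicator_of_mem hyU]
        refine ENNReal.ofReal_le_ofReal ?_
        have h1 : (φb y + 1) * χ y * ζb y ≤ (φb y + 1) * 1 * ζb y :=
          mul_le_mul_of_nonneg_right
            (mul_le_mul_of_nonneg_left (hχmem y).2 (by linarith [hφpos y hy])) (hζnn y hy)
        simpa using h1
      · have h0 : χ y = 0 := hχ0 hyU
        simp [h0]
    have hlint : (∫⁻ y in Set.Ici t0, ENNReal.ofReal ((φb y + 1) * χ y * ζb y)) ≤ μ' U := by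
      have h1 : (∫⁻ y in Set.Ici t0, ENNReal.ofReal ((φb y + 1) * χ y * ζb y)) ≤
          ∫⁻ y in Set.Ici t0, U.indicator gE y := by
        refine lintegral_mono_ae ?_
        exact (ae_restrict_iff' measurableSet_Ici).2 (Filter.Eventually.of_forall key)
      have h2 : (∫⁻ y in Set.Ici t0, U.indicator gE y) = μ' U := by
        rw [lintegral_indicator hUopen.measurableSet]
        rw [hμ', withDensity_apply _ hUopen.measurableSet]
      rw [h2] at h1; exact h1
    have hμ'Une : μ' U ≠ ⊤ := (hμ'U.trans ENNReal.ofReal_lt_top).ne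
    have hf2cont : Continuous (fun y => (φb y + 1) * χ y * ζb y) :=
      ((hφb.add continuous_const).mul χ.continuous).mul hζb
    have hf2int : IntegrableOn (fun y => (φb y + 1) * χ y * ζb y) (Set.Ici t0) := by
      refine ⟨hf2cont.aestronglyMeasurable, ?_⟩
      rw [hasFiniteIntegral_iff_norm]
      have : (∫⁻ y in Set.Ici t0, ENNReal.ofReal ‖(φb y + 1) * χ y * ζb y‖) ≤ μ' U := by
        refine le_trans (lintegral_mono_ae ?_) hlint
        refine (ae_restrict_iff' measurableSet_Ici).2 (Filter.Eventually.of_forall ?_)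
        intro y hy
        rw [Real.norm_eq_abs, abs_of_nonneg (hf2nn y hy)]
      exact lt_of_le_of_lt this hμ'Une.lt_top
    have hf2le : (∫ y in Set.Ici t0, (φb y + 1) * χ y * ζb y) ≤ ε / 4 := by
      rw [integral_eq_lintegral_of_nonneg_ae
        ((ae_restrict_iff' measurableSet_Ici).2 (Filter.Eventually.of_forall hf2nn))
        hf2cont.aestronglyMeasurable]
      have h1 : (∫⁻ y in Set.Ici t0, ENNReal.ofReal ((φb y + 1) * χ y * ζb y)) ≤
          ENNReal.ofReal (ε / 4) := hlint.trans hμ'U.le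
      calc (∫⁻ y in Set.Ici t0, ENNReal.ofReal ((φb y + 1) * χ y * ζb y)).toReal
          ≤ (ENNReal.ofReal (ε / 4)).toReal :=
            ENNReal.toReal_mono ENNReal.ofReal_ne_top h1
        _ = ε / 4 := ENNReal.toReal_ofReal (by linarith)
    have hρζle : (∫ y in Set.Ici t0, ρ y * ζb y) ≤ δ * Real.sqrt Real.pi := by
      have h1 : (∫ y in Set.Ici t0, ρ y * ζb y) ≤
          ∫ y in Set.Ici t0, δ * Real.exp (-1 * y^2) :=
        setIntegral_mono_on hρζint hgauss.integrableOn measurableSet_Ici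
          (fun y _ => le_trans (le_abs_self _) (hbound y))
      have h2 : (∫ y in Set.Ici t0, δ * Real.exp (-1 * y^2)) ≤
          ∫ y : ℝ, δ * Real.exp (-1 * y^2) :=
        setIntegral_le_integral hgauss (Filter.Eventually.of_forall (fun y => by positivity))
      have h3 : (∫ y : ℝ, δ * Real.exp (-1 * y^2)) = δ * Real.sqrt Real.pi := by
        rw [MeasureTheory.integral_const_mul, integral_gaussian]
        norm_num
      linarith
    have hsplit : (fun y => (ρ y + (φb y + 1) * χ y) * ζb y) =
        (fun y => ρ y * ζb y + (φb y + 1) * χ y * ζb y) := funext fun y => by ring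
    have hδπ : δ * Real.sqrt Real.pi < ε / 2 := by
      rw [hδdef, div_mul_eq_mul_div, div_lt_iff₀ (by positivity)]
      nlinarith [Real.sqrt_nonneg Real.pi]
    constructor
    · beta_reduce
      rw [hsplit]; exact hρζint.add hf2int
    · beta_reduce
      rw [hsplit, integral_add hρζint hf2int]
      linarith

/-- Fact I, integral domination lemma. -/
theorem stmt11 (t0 : ℝ) (ht0 : 0 ≤ t0)
    (φ ζ θ : ℝ → ℝ)
    (hφc : ContinuousOn φ (Set.Ici t0)) (hζc : ContinuousOn ζ (Set.Ici t0))
    (hθc : ContinuousOn θ (Set.Ici t0))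
    (hφpos : ∀ t, t0 ≤ t → 0 < φ t)
    (hζnn : ∀ t, t0 ≤ t → 0 ≤ ζ t)
    (hθnn : ∀ t, t0 ≤ t → 0 ≤ θ t)
    (hθae : ∀ᵐ t ∂(volume.restrict (Set.Ici t0)), θ t ≠ 0) :
    ∀ ε : ℝ, 0 < ε →
      ∃ l h : ℝ → ℝ,
        ContDiff ℝ 1 l ∧ ContinuousOn h (Set.Ici t0) ∧
        (∀ t, t0 ≤ t → 0 ≤ l t) ∧ (∀ t, t0 ≤ t → 0 ≤ h t) ∧
        (∀ t, t0 ≤ t → (φ t - l t * θ t) * ζ t ≤ h t) ∧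
        (∀ t, t0 ≤ t → l t * θ t ≤ φ t) ∧
        IntegrableOn h (Set.Ici t0) volume ∧
        (∫ s in Set.Ici t0, h s) < ε ∧
        l t0 = 0 := by
  intro ε hε
  have hmc : Continuous (fun y : ℝ => max y t0) := continuous_id.max continuous_const
  have hmem : ∀ y : ℝ, max y t0 ∈ Set.Ici t0 := fun y => le_max_right y t0
  set φb : ℝ → ℝ := fun y => φ (max y t0) with hφbdef
  set ζb : ℝ → ℝ := fun y => ζ (max y t0) with hζbdef
  set θb : ℝ → ℝ := fun y => θ (max y t0) with hθbdef
  have hφbc : Continuous φb := hφc.comp_continuous hmc hmem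
  have hζbc : Continuous ζb := hζc.comp_continuous hmc hmem
  have hθbc : Continuous θb := hθc.comp_continuous hmc hmem
  have hφbe : ∀ t, t0 ≤ t → φb t = φ t := fun t ht => by
    simp only [hφbdef, max_eq_left ht]
  have hζbe : ∀ t, t0 ≤ t → ζb t = ζ t := fun t ht => by
    simp only [hζbdef, max_eq_left ht]
  have hθbe : ∀ t, t0 ≤ t → θb t = θ t := fun t ht => by
    simp only [hθbdef, max_eq_left ht]
  have hφbpos : ∀ y ∈ Set.Ici t0, 0 < φb y := fun y hy => by
    rw [hφbe y hy]; exact hφpos y hy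
  have hζbnn : ∀ y ∈ Set.Ici t0, 0 ≤ ζb y := fun y hy => by
    rw [hζbe y hy]; exact hζnn y hy
  have hZ0 : volume.restrict (Set.Ici t0) ({t0} ∪ {y | θb y = 0}) = 0 := by
    apply measure_union_null
    · rw [Measure.restrict_apply (measurableSet_singleton t0)]
      exact measure_mono_null Set.inter_subset_left Real.volume_singleton
    · have h' : volume ({a | θ a = 0} ∩ Set.Ici t0) = 0 := by
        have h2 := ae_iff.1 hθae
        simp only [not_not] at h2
        rwa [Measure.restrict_apply' measurableSet_Ici] at h2
      rw [Measure.restrict_apply' measurableSet_Ici]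
      refine measure_mono_null ?_ h'
      rintro y ⟨hy1, hy2⟩
      exact ⟨show θ y = 0 by rw [← hθbe y hy2]; exact hy1, hy2⟩
  obtain ⟨r, hrc, hrpos, hrZ, hrint, hrlt⟩ :=
    exists_r t0 ε hε φb ζb θb hφbc hζbc hθbc hφbpos hζbnn hZ0
  set T : ℝ → Set ℝ := fun y => {c | (y ≤ t0 → c = 0) ∧
      (t0 ≤ y → 0 ≤ c ∧ c * θb y ≤ φb y ∧ φb y - c * θb y ≤ r y)} with hTdef
  have hTconv : ∀ y, Convex ℝ (T y) := by
    intro y c1 hc1 c2 hc2 a b ha hb hab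
    constructor
    · intro hy
      have e1 := hc1.1 hy; have e2 := hc2.1 hy
      simp only [smul_eq_mul, e1, e2, mul_zero, add_zero]
    · intro hy
      obtain ⟨h11, h12, h13⟩ := hc1.2 hy
      obtain ⟨h21, h22, h23⟩ := hc2.2 hy
      simp only [smul_eq_mul]
      refine ⟨add_nonneg (mul_nonneg ha h11) (mul_nonneg hb h21), ?_, ?_⟩
      all_goals {
        have A1 := mul_le_mul_of_nonneg_left h12 ha
        have B1 := mul_le_mul_of_nonneg_left h22 hb
        have A2 := mul_le_mul_of_nonneg_left h13 ha
        have B2 := mul_le_mul_of_nonneg_left h23 hb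
        have hab1 : a * φb y + b * φb y = φb y := by rw [← add_mul, hab, one_mul]
        have hab2 : a * r y + b * r y = r y := by rw [← add_mul, hab, one_mul]
        nlinarith [A1, B1, A2, B2, hab1, hab2] }
  have hHloc : ∀ x : ℝ, ∃ c : ℝ, ∀ᶠ y in nhds x, c ∈ T y := by
    intro x
    rcases lt_or_ge x t0 with hx | hx
    · refine ⟨0, ?_⟩
      filter_upwards [Iio_mem_nhds hx] with y hy
      exact ⟨fun _ => rfl, fun hy2 => absurd hy2 (not_le.2 hy)⟩
    · by_cases hxZ : x = t0 ∨ θb x = 0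
      · refine ⟨0, ?_⟩
        have hxZ' : x ∈ ({t0} ∪ {y | θb y = 0}) ∩ Set.Ici t0 := by
          refine ⟨?_, hx⟩
          rcases hxZ with h | h
          · exact Or.inl (by simp [h])
          · exact Or.inr h
        have hlt : φb x < r x := hrZ x hxZ'
        have hev : ∀ᶠ y in nhds x, φb y < r y :=
          (isOpen_lt hφbc hrc).eventually_mem hlt
        filter_upwards [hev] with y hy
        refine ⟨fun _ => rfl, fun hy2 => ⟨le_refl 0, ?_, ?_⟩⟩
        · rw [zero_mul]; exact (hφbpos y hy2).le
        · rw [zero_mul, sub_zero]; exact hy.le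
      · push_neg at hxZ
        obtain ⟨hxne, hθne⟩ := hxZ
        have hxgt : t0 < x := lt_of_le_of_ne hx (Ne.symm hxne)
        have hθpos : 0 < θb x := by
          rcases lt_or_eq_of_le (by rw [hθbe x hx]; exact hθnn x hx : (0:ℝ) ≤ θb x) with h | h
          · exact h
          · exact absurd h.symm hθne
        have hrx : 0 < r x := hrpos x hx
        set c := max 0 ((φb x - r x / 2) / θb x) with hcdef
        have hcnn : (0:ℝ) ≤ c := le_max_left _ _
        have hA : c * θb x < φb x ∧ φb x - c * θb x < r x := by
          rcases le_or_gt (φb x) (r x / 2) with h | h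
          · have hq : (φb x - r x / 2) / θb x ≤ 0 :=
              div_nonpos_of_nonpos_of_nonneg (by linarith) hθpos.le
            have hc0 : c = 0 := max_eq_left hq
            rw [hc0, zero_mul]
            constructor
            · simpa using hφbpos x hx
            · rw [sub_zero]; linarith
          · have hq : 0 ≤ (φb x - r x / 2) / θb x := div_nonneg (by linarith) hθpos.le
            have hc0 : c = (φb x - r x / 2) / θb x := max_eq_right hq
            have hmul : c * θb x = φb x - r x / 2 := by
              rw [hc0, div_mul_cancel₀ _ hθpos.ne']
            rw [hmul]
            constructor <;> linarith
        have hev1 : ∀ᶠ y in nhds x, c * θb y < φb y :=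
          (isOpen_lt (continuous_const.mul hθbc) hφbc).eventually_mem hA.1
        have hev2 : ∀ᶠ y in nhds x, φb y - c * θb y < r y :=
          (isOpen_lt (hφbc.sub (continuous_const.mul hθbc)) hrc).eventually_mem hA.2
        have hev3 : ∀ᶠ y in nhds x, t0 < y := Ioi_mem_nhds hxgt
        refine ⟨c, ?_⟩
        filter_upwards [hev1, hev2, hev3] with y h1 h2 h3
        exact ⟨fun hy => absurd hy (not_le.2 h3), fun _ => ⟨hcnn, h1.le, h2.le⟩⟩
  obtain ⟨l, hlC, hl⟩ := smooth_sel T hTconv hHloc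
  have hl0 : ∀ t, t0 ≤ t → 0 ≤ l t := fun t ht => ((hl t).2 ht).1
  have hlθ : ∀ t, t0 ≤ t → l t * θ t ≤ φ t := fun t ht => by
    have h1 := ((hl t).2 ht).2.1
    rwa [hθbe t ht, hφbe t ht] at h1
  have hlr : ∀ t, t0 ≤ t → φ t - l t * θ t ≤ r t := fun t ht => by
    have h1 := ((hl t).2 ht).2.2
    rwa [hθbe t ht, hφbe t ht] at h1
  have hhnn : ∀ t, t0 ≤ t → 0 ≤ (φ t - l t * θ t) * ζ t := fun t ht =>
    mul_nonneg (by linarith [hlθ t ht]) (hζnn t ht)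
  have hhcont : ContinuousOn (fun t => (φ t - l t * θ t) * ζ t) (Set.Ici t0) :=
    ((hφc.sub ((hlC.continuous.continuousOn).mul hθc)).mul hζc)
  have hhle : ∀ t ∈ Set.Ici t0, (φ t - l t * θ t) * ζ t ≤ r t * ζb t := fun t ht => by
    rw [hζbe t ht]
    exact mul_le_mul_of_nonneg_right (hlr t ht) (hζnn t ht)
  have hhint : IntegrableOn (fun t => (φ t - l t * θ t) * ζ t) (Set.Ici t0) := by
    refine Integrable.mono' hrint (hhcont.aestronglyMeasurable measurableSet_Ici) ?_
    refine (ae_restrict_iff' measurableSet_Ici).2 (Filter.Eventually.of_forall ?_)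
    intro t ht
    rw [Real.norm_eq_abs, abs_of_nonneg (hhnn t ht)]
    exact hhle t ht
  refine ⟨l, fun t => (φ t - l t * θ t) * ζ t, hlC, hhcont, hl0, hhnn,
    fun t ht => le_refl _, hlθ, hhint, ?_, (hl t0).1 le_rfl⟩
  calc (∫ t in Set.Ici t0, (φ t - l t * θ t) * ζ t)
      ≤ ∫ t in Set.Ici t0, r t * ζb t :=
        setIntegral_mono_on hhint hrint measurableSet_Ici hhle
    _ < ε := hrlt
end

section
/- Forward completeness of the system in Example 3.1: For every locally Lipschitz a : ℝ → ℝ, every solution x(t) = (x_1(t), x_2(t), x_3(t)) of the system ẋ_1 = −x_1 + a(x_1)x_2, ẋ_2 = −x_1 a(x_1) + x_2/(x_1² + x_2² + x_3² + 1), ẋ_3 = −x_3/(x_1² + x_2² + 1) with initial condition x(0) = x_0 exists for all t ≥ 0 and satisfies |x(t)| ≤ 2√t + √2 |x_0|. -/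
open Set Metric


/-- Product of a bounded Lipschitz scalar function and a bounded Lipschitz vector function
is Lipschitz on a set. -/
lemma lipschitzOnWith_smul {α : Type*} [PseudoMetricSpace α] {E : Type*} [NormedAddCommGroup E]
    [NormedSpace ℝ E] {f : α → ℝ} {g : α → E} {s : Set α} {Kf Kg : NNReal} {A B : ℝ}
    (hf : LipschitzOnWith Kf f s) (hg : LipschitzOnWith Kg g s)
    (hA : ∀ x ∈ s, |f x| ≤ A) (hB : ∀ x ∈ s, ‖g x‖ ≤ B)
    (hA0 : 0 ≤ A) (hB0 : 0 ≤ B) :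
    LipschitzOnWith ((A * Kg + B * Kf).toNNReal) (fun x => f x • g x) s := by
  apply LipschitzOnWith.of_dist_le_mul
  intro x hx y hy
  have h1 : dist (f x) (f y) ≤ Kf * dist x y := hf.dist_le_mul x hx y hy
  have h2 : dist (g x) (g y) ≤ Kg * dist x y := hg.dist_le_mul x hx y hy
  have key : dist (f x • g x) (f y • g y) ≤ (A * Kg + B * Kf) * dist x y := by
    rw [dist_eq_norm]
    have : f x • g x - f y • g y = f x • (g x - g y) + (f x - f y) • g y := by
      rw [smul_sub, sub_smul]; abel
    rw [this]
    calc ‖f x • (g x - g y) + (f x - f y) • g y‖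
        ≤ ‖f x • (g x - g y)‖ + ‖(f x - f y) • g y‖ := norm_add_le _ _
      _ = |f x| * ‖g x - g y‖ + |f x - f y| * ‖g y‖ := by
          rw [norm_smul, norm_smul, Real.norm_eq_abs, Real.norm_eq_abs]
      _ ≤ A * (Kg * dist x y) + (Kf * dist x y) * B := by
          have e1 : ‖g x - g y‖ = dist (g x) (g y) := (dist_eq_norm _ _).symm
          have e2 : |f x - f y| = dist (f x) (f y) := (Real.dist_eq _ _).symm
          rw [e1, e2]
          refine add_le_add ?_ ?_
          · exact mul_le_mul (hA x hx) h2 dist_nonneg hA0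
          · exact mul_le_mul h1 (hB y hy) (norm_nonneg _) (by positivity)
      _ = (A * Kg + B * Kf) * dist x y := by ring
  refine key.trans (mul_le_mul_of_nonneg_right ?_ dist_nonneg)
  exact Real.le_coe_toNNReal _

/-- A locally Lipschitz function is Lipschitz on every compact set. -/
lemma LocallyLipschitz.exists_lipschitzOnWith {X Y : Type*} [MetricSpace X] [MetricSpace Y]
    {f : X → Y} (hf : LocallyLipschitz f) {s : Set X} (hs : IsCompact s) :
    ∃ K : NNReal, LipschitzOnWith K f s := by
  rcases s.eq_empty_or_nonempty with rfl | ⟨x0, hx0⟩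
  · exact ⟨1, by simp⟩
  have H : ∀ x : X, ∃ r : ℝ, 0 < r ∧ ∃ K : NNReal, LipschitzOnWith K f (ball x r) := by
    intro x
    obtain ⟨K, t, ht, hK⟩ := hf x
    obtain ⟨r, hr, hball⟩ := Metric.mem_nhds_iff.mp ht
    exact ⟨r, hr, K, hK.mono hball⟩
  choose r hr K hK using H
  obtain ⟨T, hTs, hcov⟩ := hs.elim_nhds_subcover (fun x => ball x (r x / 2))
    (fun x _ => ball_mem_nhds x (half_pos (hr x)))
  have hTne : T.Nonempty := by
    rcases Set.mem_iUnion₂.mp (hcov hx0) with ⟨z, hz, _⟩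
    exact ⟨z, hz⟩
  set δ : ℝ := T.inf' hTne (fun x => r x / 2) with hδdef
  have hδpos : 0 < δ := by
    rw [hδdef, Finset.lt_inf'_iff]
    exact fun x _ => half_pos (hr x)
  obtain ⟨C, hC⟩ := (hs.image hf.continuous).isBounded.subset_closedBall (f x0)
  have hC0 : 0 ≤ C := by
    have := hC ⟨x0, hx0, rfl⟩
    simpa using this
  set Kb : NNReal := T.sup K ⊔ (2 * C / δ).toNNReal with hKb
  refine ⟨Kb, LipschitzOnWith.of_dist_le_mul fun x hx y hy => ?_⟩
  rcases lt_or_ge (dist x y) δ with hlt | hge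
  · rcases Set.mem_iUnion₂.mp (hcov hx) with ⟨z, hzT, hxz⟩
    have hδz : δ ≤ r z / 2 := Finset.inf'_le _ hzT
    have hxz' : x ∈ ball z (r z) := by
      rw [mem_ball] at hxz ⊢; linarith [hr z]
    have hyz : y ∈ ball z (r z) := by
      rw [mem_ball] at hxz ⊢
      have : dist y z ≤ dist y x + dist x z := dist_triangle _ _ _
      rw [dist_comm y x] at this
      linarith
    have := (hK z).dist_le_mul x hxz' y hyz
    refine this.trans (mul_le_mul_of_nonneg_right ?_ dist_nonneg)
    exact_mod_cast NNReal.coe_le_coe.mpr ((Finset.le_sup hzT).trans le_sup_left)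
  · have hfx : f x ∈ closedBall (f x0) C := hC ⟨x, hx, rfl⟩
    have hfy : f y ∈ closedBall (f x0) C := hC ⟨y, hy, rfl⟩
    have hd : dist (f x) (f y) ≤ 2 * C := by
      have := dist_triangle (f x) (f x0) (f y)
      rw [mem_closedBall] at hfx hfy
      rw [dist_comm (f x0) (f y)] at this
      linarith
    have h2 : 2 * C = (2 * C / δ) * δ := by field_simp
    calc dist (f x) (f y) ≤ 2 * C := hd
      _ = (2 * C / δ) * δ := h2
      _ ≤ (2 * C / δ) * dist x y := mul_le_mul_of_nonneg_left hge (by positivity)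
      _ ≤ Kb * dist x y := by
          refine mul_le_mul_of_nonneg_right ?_ dist_nonneg
          refine (Real.le_coe_toNNReal _).trans ?_
          exact_mod_cast NNReal.coe_le_coe.mpr le_sup_right

noncomputable def vf (a : ℝ → ℝ) (x : ℝ × ℝ × ℝ) : ℝ × ℝ × ℝ :=
  (-x.1 + a x.1 * x.2.1,
   (-x.1 * a x.1 + x.2.1 / (x.1 ^ 2 + x.2.1 ^ 2 + x.2.2 ^ 2 + 1),
    -x.2.2 / (x.1 ^ 2 + x.2.1 ^ 2 + 1)))

lemma vf_eq (a : ℝ → ℝ) : vf a = fun x : ℝ × ℝ × ℝ =>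
    (-x.1, (x.2.1 / (x.1 ^ 2 + x.2.1 ^ 2 + x.2.2 ^ 2 + 1),
      -x.2.2 / (x.1 ^ 2 + x.2.1 ^ 2 + 1))) + a x.1 • (x.2.1, (-x.1, (0 : ℝ))) := by
  funext x
  simp only [vf, Prod.mk_add_mk, Prod.smul_mk, smul_eq_mul, Prod.mk.injEq]
  refine ⟨trivial, by ring, by ring⟩

lemma vf_inner_le (a : ℝ → ℝ) (x : ℝ × ℝ × ℝ) :
    x.1 * (vf a x).1 + x.2.1 * (vf a x).2.1 + x.2.2 * (vf a x).2.2 ≤ 1 := by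
  obtain ⟨p, q, r⟩ := x
  simp only [vf]
  have hQ : (0:ℝ) < p ^ 2 + q ^ 2 + r ^ 2 + 1 := by positivity
  have hW : (0:ℝ) < p ^ 2 + q ^ 2 + 1 := by positivity
  have h1 : q * (q / (p ^ 2 + q ^ 2 + r ^ 2 + 1)) ≤ 1 := by
    rw [← mul_div_assoc, div_le_one hQ]; nlinarith [sq_nonneg p, sq_nonneg r]
  have h2 : (0:ℝ) ≤ r * (r / (p ^ 2 + q ^ 2 + 1)) := by
    rw [← mul_div_assoc]; exact div_nonneg (mul_self_nonneg r) hW.le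
  have expand : p * (-p + a p * q) + q * (-p * a p + q / (p ^ 2 + q ^ 2 + r ^ 2 + 1)) +
      r * (-r / (p ^ 2 + q ^ 2 + 1)) =
      -p ^ 2 + q * (q / (p ^ 2 + q ^ 2 + r ^ 2 + 1)) - r * (r / (p ^ 2 + q ^ 2 + 1)) := by
    ring
  rw [expand]
  nlinarith [sq_nonneg p]




noncomputable def chi (R : ℝ) (x : ℝ × ℝ × ℝ) : ℝ := min 1 (max 0 (R + 1 - ‖x‖))

lemma chi_lipschitz (R : ℝ) : LipschitzWith 1 (chi R) := by
  have h1 : LipschitzWith 1 (fun x : ℝ × ℝ × ℝ => R + 1 - ‖x‖) := by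
    apply LipschitzWith.of_dist_le_mul
    intro x y
    rw [Real.dist_eq, NNReal.coe_one, one_mul]
    have : (R + 1 - ‖x‖) - (R + 1 - ‖y‖) = ‖y‖ - ‖x‖ := by ring
    rw [this, dist_eq_norm]
    calc |‖y‖ - ‖x‖| ≤ ‖y - x‖ := abs_norm_sub_norm_le _ _
      _ = ‖x - y‖ := by rw [norm_sub_rev]
  exact (h1.const_max 0).const_min 1

lemma chi_nonneg (R : ℝ) (x : ℝ × ℝ × ℝ) : 0 ≤ chi R x := by
  simp [chi]
lemma chi_le_one (R : ℝ) (x : ℝ × ℝ × ℝ) : chi R x ≤ 1 := min_le_left _ _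
lemma chi_eq_one (R : ℝ) (x : ℝ × ℝ × ℝ) (h : ‖x‖ ≤ R) : chi R x = 1 := by
  have h1 : (1:ℝ) ≤ R + 1 - ‖x‖ := by linarith
  simp only [chi]
  rw [max_eq_right (by linarith), min_eq_left h1]
lemma chi_eq_zero (R : ℝ) (x : ℝ × ℝ × ℝ) (h : R + 1 ≤ ‖x‖) : chi R x = 0 := by
  simp only [chi]
  rw [max_eq_left (by linarith), min_eq_right zero_le_one]
lemma vf_exists_lipschitzOnWith (a : ℝ → ℝ) (ha : LocallyLipschitz a)
    {s : Set (ℝ × ℝ × ℝ)} (hs : IsCompact s) :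
    ∃ K : NNReal, LipschitzOnWith K (vf a) s := by
  have c1 : ContDiff ℝ 1 (fun x : ℝ × ℝ × ℝ => x.1) := contDiff_fst
  have c2 : ContDiff ℝ 1 (fun x : ℝ × ℝ × ℝ => x.2.1) := contDiff_snd.fst
  have c3 : ContDiff ℝ 1 (fun x : ℝ × ℝ × ℝ => x.2.2) := contDiff_snd.snd
  have hQ : ContDiff ℝ 1 (fun x : ℝ × ℝ × ℝ => x.1 ^ 2 + x.2.1 ^ 2 + x.2.2 ^ 2 + 1) :=
    (((c1.pow 2).add (c2.pow 2)).add (c3.pow 2)).add contDiff_const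
  have hW : ContDiff ℝ 1 (fun x : ℝ × ℝ × ℝ => x.1 ^ 2 + x.2.1 ^ 2 + 1) :=
    ((c1.pow 2).add (c2.pow 2)).add contDiff_const
  have hg : ContDiff ℝ 1 (fun x : ℝ × ℝ × ℝ =>
      ((-x.1, (x.2.1 / (x.1 ^ 2 + x.2.1 ^ 2 + x.2.2 ^ 2 + 1),
        -x.2.2 / (x.1 ^ 2 + x.2.1 ^ 2 + 1))) : ℝ × ℝ × ℝ)) := by
    refine c1.neg.prodMk (ContDiff.prodMk ?_ ?_)
    · exact c2.div hQ (fun x => by positivity)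
    · exact c3.neg.div hW (fun x => by positivity)
  have hw : ContDiff ℝ 1 (fun x : ℝ × ℝ × ℝ => ((x.2.1, (-x.1, (0:ℝ))) : ℝ × ℝ × ℝ)) :=
    c2.prodMk (c1.neg.prodMk contDiff_const)
  obtain ⟨K1, hK1⟩ := hg.locallyLipschitz.exists_lipschitzOnWith hs
  obtain ⟨K2, hK2⟩ := hw.locallyLipschitz.exists_lipschitzOnWith hs
  have haf : LocallyLipschitz (fun x : ℝ × ℝ × ℝ => a x.1) :=
    ha.comp LipschitzWith.prod_fst.locallyLipschitz
  obtain ⟨K3, hK3⟩ := haf.exists_lipschitzOnWith hs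
  obtain ⟨A, hA⟩ := hs.exists_bound_of_continuousOn haf.continuous.continuousOn
  obtain ⟨B, hB⟩ := hs.exists_bound_of_continuousOn hw.continuous.continuousOn
  refine ⟨K1 + (max A 0 * K2 + max B 0 * K3).toNNReal, ?_⟩
  rw [vf_eq]
  refine LipschitzOnWith.add hK1 ?_
  refine lipschitzOnWith_smul hK3 hK2 ?_ ?_ (le_max_right _ _) (le_max_right _ _)
  · exact fun x hx => le_trans (by simpa using hA x hx) (le_max_left _ _)
  · exact fun x hx => le_trans (hB x hx) (le_max_left _ _)

lemma hasDerivAt_c1 {f : ℝ → ℝ × ℝ × ℝ} {w : ℝ × ℝ × ℝ} {t : ℝ} (h : HasDerivAt f w t) :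
    HasDerivAt (fun s => (f s).1) w.1 t := by
  simpa using h.hasFDerivAt.fst.hasDerivAt

lemma hasDerivAt_c2 {f : ℝ → ℝ × ℝ × ℝ} {w : ℝ × ℝ × ℝ} {t : ℝ} (h : HasDerivAt f w t) :
    HasDerivAt (fun s => (f s).2.1) w.2.1 t := by
  simpa using h.hasFDerivAt.snd.fst.hasDerivAt

lemma hasDerivAt_c3 {f : ℝ → ℝ × ℝ × ℝ} {w : ℝ × ℝ × ℝ} {t : ℝ} (h : HasDerivAt f w t) :
    HasDerivAt (fun s => (f s).2.2) w.2.2 t := by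
  simpa using h.hasFDerivAt.snd.snd.hasDerivAt

lemma hasDerivAt_normsq {f : ℝ → ℝ × ℝ × ℝ} {w : ℝ × ℝ × ℝ} {t : ℝ} (h : HasDerivAt f w t) :
    HasDerivAt (fun s => (f s).1 ^ 2 + (f s).2.1 ^ 2 + (f s).2.2 ^ 2)
      (2 * ((f t).1 * w.1 + (f t).2.1 * w.2.1 + (f t).2.2 * w.2.2)) t := by
  have h1 := ((hasDerivAt_c1 h).fun_pow 2).fun_add ((hasDerivAt_c2 h).fun_pow 2)
  have h2 := h1.fun_add ((hasDerivAt_c3 h).fun_pow 2)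
  refine h2.congr_deriv ?_
  push_cast
  ring

lemma le_of_deriv_le_two {g g' : ℝ → ℝ} {c : ℝ}
    (hg : ∀ t ∈ Icc (0:ℝ) c, HasDerivAt g (g' t) t)
    (h2 : ∀ t ∈ Icc (0:ℝ) c, g' t ≤ 2) : ∀ t ∈ Icc (0:ℝ) c, g t ≤ g 0 + 2 * t := by
  intro t ht
  have hc : (0:ℝ) ≤ c := le_trans ht.1 ht.2
  have hmono : AntitoneOn (fun s => g s - 2 * s) (Icc 0 c) := by
    have hd : ∀ s ∈ Icc (0:ℝ) c, HasDerivAt (fun s => g s - 2 * s) (g' s - 2) s := by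
      intro s hs
      simpa using (hg s hs).fun_sub ((hasDerivAt_id s).const_mul 2)
    apply antitoneOn_of_deriv_nonpos (convex_Icc 0 c)
    · exact fun s hs => (hd s hs).continuousAt.continuousWithinAt
    · intro s hs
      rw [interior_Icc] at hs
      exact ((hd s (Ioo_subset_Icc_self hs)).differentiableAt).differentiableWithinAt
    · intro s hs
      rw [interior_Icc] at hs
      rw [(hd s (Ioo_subset_Icc_self hs)).deriv]
      linarith [h2 s (Ioo_subset_Icc_self hs)]
  have := hmono (left_mem_Icc.mpr hc) ht ht.1
  simp only at this
  linarith

lemma my_sqrt_add_le (a b : ℝ) (ha : 0 ≤ a) (hb : 0 ≤ b) :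
    Real.sqrt (a + b) ≤ Real.sqrt a + Real.sqrt b := by
  have h := Real.sqrt_le_sqrt (show a + b ≤ (Real.sqrt a + Real.sqrt b) ^ 2 by
    nlinarith [Real.sq_sqrt ha, Real.sq_sqrt hb, Real.sqrt_nonneg a, Real.sqrt_nonneg b])
  rwa [Real.sqrt_sq (by positivity)] at h
lemma norm_le_sqrt_of_normsq_le {x : ℝ × ℝ × ℝ} {M : ℝ}
    (h : x.1 ^ 2 + x.2.1 ^ 2 + x.2.2 ^ 2 ≤ M) : ‖x‖ ≤ Real.sqrt M := by
  have key : ∀ u : ℝ, u ^ 2 ≤ M → |u| ≤ Real.sqrt M := by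
    intro u hu
    rw [← Real.sqrt_sq_eq_abs]
    exact Real.sqrt_le_sqrt hu
  have h1 := key x.1 (by nlinarith [sq_nonneg x.2.1, sq_nonneg x.2.2])
  have h2 := key x.2.1 (by nlinarith [sq_nonneg x.1, sq_nonneg x.2.2])
  have h3 := key x.2.2 (by nlinarith [sq_nonneg x.1, sq_nonneg x.2.1])
  rw [Prod.norm_def, Prod.norm_def, Real.norm_eq_abs, Real.norm_eq_abs, Real.norm_eq_abs]
  exact max_le h1 (max_le h2 h3)

lemma normsq_bound {f : ℝ → ℝ × ℝ × ℝ} {u : ℝ → ℝ × ℝ × ℝ} {c : ℝ}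
    (hf : ∀ t ∈ Icc (0:ℝ) c, HasDerivAt f (u t) t)
    (hu : ∀ t ∈ Icc (0:ℝ) c,
      (f t).1 * (u t).1 + (f t).2.1 * (u t).2.1 + (f t).2.2 * (u t).2.2 ≤ 1) :
    ∀ t ∈ Icc (0:ℝ) c, (f t).1 ^ 2 + (f t).2.1 ^ 2 + (f t).2.2 ^ 2 ≤
      ((f 0).1 ^ 2 + (f 0).2.1 ^ 2 + (f 0).2.2 ^ 2) + 2 * t := by
  apply le_of_deriv_le_two (fun t ht => hasDerivAt_normsq (hf t ht))
  intro t ht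
  linarith [hu t ht]

lemma vf_continuous (a : ℝ → ℝ) (ha : LocallyLipschitz a) : Continuous (vf a) := by
  rw [continuous_iff_continuousAt]
  intro x
  obtain ⟨K, hK⟩ := vf_exists_lipschitzOnWith a ha (isCompact_closedBall x 1)
  exact hK.continuousOn.continuousAt (closedBall_mem_nhds x one_pos)

lemma exists_sol (a : ℝ → ℝ) (ha : LocallyLipschitz a) (x₀ : ℝ × ℝ × ℝ) {T : ℝ} (hT : 0 < T) :
    ∃ f : ℝ → ℝ × ℝ × ℝ, f 0 = x₀ ∧ ∀ t ∈ Ico (0:ℝ) T, HasDerivAt f (vf a (f t)) t := by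
  set V0 : ℝ := x₀.1 ^ 2 + x₀.2.1 ^ 2 + x₀.2.2 ^ 2 with hV0
  have hV0nn : 0 ≤ V0 := by positivity
  set R : ℝ := Real.sqrt (V0 + 2 * T) with hR
  set G : (ℝ × ℝ × ℝ) → ℝ × ℝ × ℝ := fun x => chi R x • vf a x with hG
  obtain ⟨C0, hC0⟩ := (isCompact_closedBall (0 : ℝ × ℝ × ℝ) (R + 1)).exists_bound_of_continuousOn
    (vf_continuous a ha).continuousOn
  set C : ℝ := max C0 1 with hC
  have hC1 : (1:ℝ) ≤ C := le_max_right _ _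
  have hGbound : ∀ x, ‖G x‖ ≤ C := by
    intro x
    rcases le_or_gt ‖x‖ (R + 1) with hx | hx
    · calc ‖G x‖ = |chi R x| * ‖vf a x‖ := by rw [hG]; simp [norm_smul]
        _ ≤ 1 * C0 := by
            refine mul_le_mul ?_ (hC0 x (by simpa using hx)) (norm_nonneg _) zero_le_one
            rw [abs_of_nonneg (chi_nonneg R x)]; exact chi_le_one R x
        _ ≤ C := by rw [one_mul]; exact le_max_left _ _
    · have : chi R x = 0 := chi_eq_zero R x hx.le
      simp [hG, this]
      linarith
  set R' : ℝ := C * T with hR'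
  have hR'0 : 0 ≤ R' := by positivity
  obtain ⟨KF, hKF⟩ := vf_exists_lipschitzOnWith a ha (isCompact_closedBall x₀ R')
  obtain ⟨B, hB⟩ := (isCompact_closedBall x₀ R').exists_bound_of_continuousOn
    (vf_continuous a ha).continuousOn
  have hGlip : LipschitzOnWith ((1 * KF + max B 0 * 1).toNNReal) G (closedBall x₀ R') := by
    refine lipschitzOnWith_smul ((chi_lipschitz R).lipschitzOnWith :
      LipschitzOnWith 1 (chi R) (closedBall x₀ R')) hKF ?_ ?_ zero_le_one
      (le_max_right _ _)
    · intro x _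
      rw [abs_of_nonneg (chi_nonneg R x)]; exact chi_le_one R x
    · exact fun x hx => (hB x hx).trans (le_max_left _ _)
  have hpl : IsPicardLindelof (fun _ x => G x) (tmin := -T) (tmax := T)
      ⟨0, ⟨neg_nonpos.mpr hT.le, hT.le⟩⟩ x₀ ⟨R', hR'0⟩ 0 ⟨C, by linarith⟩ _ :=
    { lipschitzOnWith := fun t _ => hGlip
      continuousOn := fun x _ => continuousOn_const
      norm_le := fun t _ x _ => hGbound x
      mul_max_le := by
        show C * max (T - 0) (0 - -T) ≤ R' - ((0 : NNReal) : ℝ)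
        rw [NNReal.coe_zero, sub_zero, hR', sub_zero, zero_sub, neg_neg, max_self] }
  obtain ⟨f, (hf0 : f 0 = x₀), hfd⟩ := hpl.exists_eq_forall_mem_Icc_hasDerivWithinAt₀
  have happ : ∀ t ∈ Ioo (-T) T, HasDerivAt f (G (f t)) t := fun t ht =>
    (hfd t (Ioo_subset_Icc_self ht)).hasDerivAt (Icc_mem_nhds ht.1 ht.2)
  -- the solution of the truncated system satisfies the a priori bound
  have hball : ∀ t ∈ Ico (0:ℝ) T, ‖f t‖ ≤ R := by
    intro t ht
    have hIcc : ∀ s ∈ Icc (0:ℝ) t, HasDerivAt f (G (f s)) s := by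
      intro s hs
      exact happ s ⟨lt_of_lt_of_le (neg_lt_zero.mpr hT) hs.1, lt_of_le_of_lt hs.2 ht.2⟩
    have hinner : ∀ s ∈ Icc (0:ℝ) t,
        (f s).1 * (G (f s)).1 + (f s).2.1 * (G (f s)).2.1 + (f s).2.2 * (G (f s)).2.2 ≤ 1 := by
      intro s _
      have hbase := vf_inner_le a (f s)
      have hc0 := chi_nonneg R (f s)
      have hc1 := chi_le_one R (f s)
      have hexp : (f s).1 * (G (f s)).1 + (f s).2.1 * (G (f s)).2.1 +
          (f s).2.2 * (G (f s)).2.2 = chi R (f s) *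
          ((f s).1 * (vf a (f s)).1 + (f s).2.1 * (vf a (f s)).2.1 +
            (f s).2.2 * (vf a (f s)).2.2) := by
        rw [hG]; simp only [Prod.smul_fst, Prod.smul_snd, smul_eq_mul]; ring
      rw [hexp]
      nlinarith
    have := normsq_bound hIcc hinner t (right_mem_Icc.mpr ht.1)
    rw [hf0] at this
    apply norm_le_sqrt_of_normsq_le
    calc (f t).1 ^ 2 + (f t).2.1 ^ 2 + (f t).2.2 ^ 2 ≤ V0 + 2 * t := this
      _ ≤ V0 + 2 * T := by linarith [ht.2]
  refine ⟨f, hf0, fun t ht => ?_⟩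
  have hchi : chi R (f t) = 1 := chi_eq_one R (f t) (hball t ht)
  have := happ t ⟨lt_of_lt_of_le (neg_lt_zero.mpr hT) ht.1, ht.2⟩
  rw [hG] at this
  simpa [hchi] using this
lemma sol_agree (a : ℝ → ℝ) (ha : LocallyLipschitz a) {f g : ℝ → ℝ × ℝ × ℝ} {Tf Tg : ℝ}
    (h0 : f 0 = g 0)
    (hfd : ∀ t ∈ Ico (0:ℝ) Tf, HasDerivAt f (vf a (f t)) t)
    (hgd : ∀ t ∈ Ico (0:ℝ) Tg, HasDerivAt g (vf a (g t)) t) :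
    ∀ t, 0 ≤ t → t < Tf → t < Tg → f t = g t := by
  intro t ht htf htg
  set ρ : ℝ := Real.sqrt (((f 0).1 ^ 2 + (f 0).2.1 ^ 2 + (f 0).2.2 ^ 2) + 2 * t) with hρ
  obtain ⟨K, hK⟩ := vf_exists_lipschitzOnWith a ha (isCompact_closedBall (0 : ℝ × ℝ × ℝ) ρ)
  have hficc : ∀ u ∈ Icc (0:ℝ) t, HasDerivAt f (vf a (f u)) u := fun u hu =>
    hfd u ⟨hu.1, lt_of_le_of_lt hu.2 htf⟩
  have hgicc : ∀ u ∈ Icc (0:ℝ) t, HasDerivAt g (vf a (g u)) u := fun u hu =>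
    hgd u ⟨hu.1, lt_of_le_of_lt hu.2 htg⟩
  have hfbd := normsq_bound hficc (fun u _ => vf_inner_le a (f u))
  have hgbd := normsq_bound hgicc (fun u _ => vf_inner_le a (g u))
  have hfb : ∀ u ∈ Ico (0:ℝ) t, f u ∈ closedBall (0 : ℝ × ℝ × ℝ) ρ := by
    intro u hu
    rw [mem_closedBall_zero_iff]
    apply norm_le_sqrt_of_normsq_le
    have := hfbd u (Ico_subset_Icc_self hu)
    linarith [hu.2.le]
  have hgb : ∀ u ∈ Ico (0:ℝ) t, g u ∈ closedBall (0 : ℝ × ℝ × ℝ) ρ := by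
    intro u hu
    rw [mem_closedBall_zero_iff]
    apply norm_le_sqrt_of_normsq_le
    have := hgbd u (Ico_subset_Icc_self hu)
    rw [← h0] at this
    linarith [hu.2.le]
  have := ODE_solution_unique_of_mem_Icc_right (v := fun _ x => vf a x)
    (s := fun _ => closedBall (0 : ℝ × ℝ × ℝ) ρ) (fun _ _ => hK)
    (fun u hu => (hficc u hu).continuousAt.continuousWithinAt)
    (fun u hu => (hficc u (Ico_subset_Icc_self hu)).hasDerivWithinAt)
    hfb
    (fun u hu => (hgicc u hu).continuousAt.continuousWithinAt)
    (fun u hu => (hgicc u (Ico_subset_Icc_self hu)).hasDerivWithinAt)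
    hgb h0
  exact this (right_mem_Icc.mpr ht)

/-- forward completeness of Example 3.1: for locally Lipschitz `a`, the
system (3.31a) has a global solution from every initial state, and every solution
satisfies `|x(t)| ≤ 2√t + √2 |x_0|`. -/
theorem stmt15 (a : ℝ → ℝ) (ha : LocallyLipschitz a) (x01 x02 x03 : ℝ) :
    (∃ x1 x2 x3 : ℝ → ℝ, x1 0 = x01 ∧ x2 0 = x02 ∧ x3 0 = x03 ∧
      ∀ t : ℝ, 0 ≤ t →
        HasDerivAt x1 (-(x1 t) + a (x1 t) * x2 t) t ∧
        HasDerivAt x2 (-(x1 t) * a (x1 t) +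
          x2 t / ((x1 t) ^ 2 + (x2 t) ^ 2 + (x3 t) ^ 2 + 1)) t ∧
        HasDerivAt x3 (-(x3 t) / ((x1 t) ^ 2 + (x2 t) ^ 2 + 1)) t) ∧
    ∀ x1 x2 x3 : ℝ → ℝ, x1 0 = x01 → x2 0 = x02 → x3 0 = x03 →
      (∀ t : ℝ, 0 ≤ t →
        HasDerivAt x1 (-(x1 t) + a (x1 t) * x2 t) t ∧
        HasDerivAt x2 (-(x1 t) * a (x1 t) +
          x2 t / ((x1 t) ^ 2 + (x2 t) ^ 2 + (x3 t) ^ 2 + 1)) t ∧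
        HasDerivAt x3 (-(x3 t) / ((x1 t) ^ 2 + (x2 t) ^ 2 + 1)) t) →
      ∀ t : ℝ, 0 ≤ t →
        Real.sqrt ((x1 t) ^ 2 + (x2 t) ^ 2 + (x3 t) ^ 2) ≤
          2 * Real.sqrt t + Real.sqrt 2 * Real.sqrt (x01 ^ 2 + x02 ^ 2 + x03 ^ 2) := by
  constructor
  · -- existence of a global solution
    set x₀ : ℝ × ℝ × ℝ := (x01, (x02, x03)) with hx₀
    have hex : ∀ n : ℕ, ∃ f : ℝ → ℝ × ℝ × ℝ, f 0 = x₀ ∧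
        ∀ t ∈ Ico (0:ℝ) ((n:ℝ) + 1), HasDerivAt f (vf a (f t)) t :=
      fun n => exists_sol a ha x₀ (by positivity)
    choose fs hfs0 hfsd using hex
    have hagree : ∀ (k m : ℕ) (s : ℝ), 0 ≤ s → s < (k:ℝ) + 1 → s < (m:ℝ) + 1 →
        fs k s = fs m s := fun k m s hs hk hm =>
      sol_agree a ha ((hfs0 k).trans (hfs0 m).symm) (hfsd k) (hfsd m) s hs hk hm
    set sol : ℝ → ℝ × ℝ × ℝ := fun t => fs ⌈t⌉₊ t with hsol
    have hsol0 : sol 0 = x₀ := by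
      rw [hsol]
      simp only [Nat.ceil_zero]
      exact hfs0 0
    have hkey : ∀ t : ℝ, 0 ≤ t → HasDerivAt sol (vf a (sol t)) t := by
      intro t ht
      set m := ⌈t⌉₊ with hm
      have htm : t ≤ (m : ℝ) := Nat.le_ceil t
      have heq : sol =ᶠ[nhds t] fs m := by
        have hsmall : ∀ s : ℝ, 0 ≤ s → s < t + 1/2 → fs ⌈s⌉₊ s = fs m s := by
          intro s hs0 hs1
          apply hagree
          · exact hs0
          · linarith [Nat.le_ceil s]
          · linarith
        rcases eq_or_lt_of_le ht with rfl | htpos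
        · have hball : Metric.ball (0:ℝ) (1/2) ∈ nhds (0:ℝ) :=
            Metric.ball_mem_nhds _ (by norm_num)
          filter_upwards [hball] with s hs
          rw [Metric.mem_ball, Real.dist_eq, sub_zero] at hs
          have hm0 : m = 0 := by rw [hm]; simp
          show fs ⌈s⌉₊ s = fs m s
          rcases le_or_gt 0 s with h0 | h0
          · exact hsmall s h0 (by rw [abs_lt] at hs; linarith)
          · have : ⌈s⌉₊ = 0 := Nat.ceil_eq_zero.mpr h0.le
            rw [this, hm0]
        · have hball : Metric.ball t (min (1/2) t) ∈ nhds t :=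
            Metric.ball_mem_nhds _ (lt_min (by norm_num) htpos)
          filter_upwards [hball] with s hs
          rw [Metric.mem_ball, Real.dist_eq, abs_lt] at hs
          have hs0 : 0 ≤ s := by
            have := hs.1
            have hmin : min (1/2 : ℝ) t ≤ t := min_le_right _ _
            linarith
          have hs1 : s < t + 1/2 := by
            have := hs.2
            have hmin : min (1/2 : ℝ) t ≤ 1/2 := min_le_left _ _
            linarith
          show fs ⌈s⌉₊ s = fs m s
          exact hsmall s hs0 hs1
      have hd : HasDerivAt (fs m) (vf a (fs m t)) t :=
        hfsd m t ⟨ht, by push_cast; linarith⟩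
      have hval : sol t = fs m t := heq.eq_of_nhds
      rw [← hval] at hd
      exact hd.congr_of_eventuallyEq heq
    refine ⟨fun t => (sol t).1, fun t => (sol t).2.1, fun t => (sol t).2.2, ?_, ?_, ?_, ?_⟩
    · simp [hsol0, hx₀]
    · simp [hsol0, hx₀]
    · simp [hsol0, hx₀]
    · intro t ht
      have h := hkey t ht
      exact ⟨hasDerivAt_c1 h, hasDerivAt_c2 h, hasDerivAt_c3 h⟩
  · -- the bound for every solution
    intro x1 x2 x3 h01 h02 h03 hode t ht
    set f : ℝ → ℝ × ℝ × ℝ := fun s => (x1 s, (x2 s, x3 s)) with hf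
    have hfd : ∀ s ∈ Icc (0:ℝ) t, HasDerivAt f (vf a (f s)) s := by
      intro s hs
      obtain ⟨h1, h2, h3⟩ := hode s hs.1
      exact h1.prodMk (h2.prodMk h3)
    have hbd := normsq_bound hfd (fun s _ => vf_inner_le a (f s)) t (right_mem_Icc.mpr ht)
    simp only [hf] at hbd
    rw [h01, h02, h03] at hbd
    set V0 : ℝ := x01 ^ 2 + x02 ^ 2 + x03 ^ 2 with hV0
    have hV0nn : 0 ≤ V0 := by positivity
    have step1 : Real.sqrt ((x1 t) ^ 2 + (x2 t) ^ 2 + (x3 t) ^ 2) ≤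
        Real.sqrt (2 * t + V0) := by
      apply Real.sqrt_le_sqrt
      linarith
    have step2 : Real.sqrt (2 * t + V0) ≤ Real.sqrt (2 * t) + Real.sqrt V0 :=
      my_sqrt_add_le _ _ (by linarith) hV0nn
    have e1 : Real.sqrt (2 * t) = Real.sqrt 2 * Real.sqrt t := Real.sqrt_mul (by norm_num) t
    have e2 : Real.sqrt 2 ≤ 2 := by
      nlinarith [Real.sq_sqrt (show (0:ℝ) ≤ 2 by norm_num), Real.sqrt_nonneg 2]
    have e3 : 1 ≤ Real.sqrt 2 := by
      nlinarith [Real.sq_sqrt (show (0:ℝ) ≤ 2 by norm_num), Real.sqrt_nonneg 2]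
    have e4 : Real.sqrt 2 * Real.sqrt t ≤ 2 * Real.sqrt t :=
      mul_le_mul_of_nonneg_right e2 (Real.sqrt_nonneg t)
    have e5 : Real.sqrt V0 ≤ Real.sqrt 2 * Real.sqrt V0 :=
      le_mul_of_one_le_left (Real.sqrt_nonneg V0) e3
    calc Real.sqrt ((x1 t) ^ 2 + (x2 t) ^ 2 + (x3 t) ^ 2)
        ≤ Real.sqrt (2 * t) + Real.sqrt V0 := step1.trans step2
      _ ≤ 2 * Real.sqrt t + Real.sqrt 2 * Real.sqrt V0 := by rw [e1]; linarith
end
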